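/- Fix γ > 0. There exists a function f : ℝ → ℝ such that for all unit vectors u, v ∈ ℝ³, (u − v)ᵀ ((1 − γ)(u uᵀ + v vᵀ) + 2γ I₃)⁻¹ (u − v) = f(‖u − v‖), where ‖·‖ is the Euclidean norm on ℝ³. In particular, this Mahalanobis-type quadratic form depends on u and v only through their Euclidean distance. -/

import Mathlib

open Matrix Real

noncomputable section

lemma vecMulVec_mulVec_aux (a b x : Fin 3 → ℝ) :
    (vecMulVec a b) *ᵥ x = (b ⬝ᵥ x) • a := by
  ext i
  simp [vecMulVec, Matrix.mulVec, dotProduct, Finset.mul_sum, mul_comm, mul_assoc, mul_left_comm]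

lemma posaux {γ a b c : ℝ} (hγ : 0 < γ) (hc : 0 < c) (ha : a ≤ c) (hb : b ≤ c)
    (ha0 : 0 ≤ a) (hb0 : 0 ≤ b) : 0 < (1 - γ) * (a + b) + 2 * γ * c := by
  rcases le_or_gt γ 1 with h | h
  · nlinarith
  · nlinarith

lemma cs3 (a b : Fin 3 → ℝ) : (a ⬝ᵥ b) ^ 2 ≤ (a ⬝ᵥ a) * (b ⬝ᵥ b) := by
  simp only [dotProduct, Fin.sum_univ_three]
  nlinarith [sq_nonneg (a 0 * b 1 - a 1 * b 0), sq_nonneg (a 0 * b 2 - a 2 * b 0),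
    sq_nonneg (a 1 * b 2 - a 2 * b 1)]

/-- For fixed γ > 0, the Mahalanobis-type quadratic form
(u − v)ᵀ ((1 − γ)(u uᵀ + v vᵀ) + 2γ I₃)⁻¹ (u − v) depends on the unit vectors u, v only
through their Euclidean distance ‖u − v‖. -/
theorem mahalanobis_isotropic (γ : ℝ) (hγ : 0 < γ) :
    ∃ f : ℝ → ℝ, ∀ u v : EuclideanSpace ℝ (Fin 3), u ⬝ᵥ u = 1 → v ⬝ᵥ v = 1 →
      (u - v) ⬝ᵥ (((1 - γ) • (vecMulVec u u + vecMulVec v v)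
          + (2 * γ) • (1 : Matrix (Fin 3) (Fin 3) ℝ))⁻¹).mulVec (u - v)
        = f ‖u - v‖ := by
  refine ⟨fun r => r ^ 2 / ((1 - γ) * r ^ 2 / 2 + 2 * γ), ?_⟩
  intro u v hu hv
  set M : Matrix (Fin 3) (Fin 3) ℝ :=
    (1 - γ) • (vecMulVec u u + vecMulVec v v)
      + (2 * γ) • (1 : Matrix (Fin 3) (Fin 3) ℝ) with hMdef
  set w : EuclideanSpace ℝ (Fin 3) := u - v with hw
  set t : ℝ := u ⬝ᵥ v with ht
  have hu3 : u 0 * u 0 + u 1 * u 1 + u 2 * u 2 = 1 := by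
    simpa [dotProduct, Fin.sum_univ_three] using hu
  have hv3 : v 0 * v 0 + v 1 * v 1 + v 2 * v 2 = 1 := by
    simpa [dotProduct, Fin.sum_univ_three] using hv
  have ht3 : t = u 0 * v 0 + u 1 * v 1 + u 2 * v 2 := by
    simp [ht, dotProduct, Fin.sum_univ_three]
  have hwi : ∀ i, (w : Fin 3 → ℝ) i = u i - v i := fun i => rfl
  have hww : w ⬝ᵥ w = 2 - 2 * t := by
    simp only [dotProduct, Fin.sum_univ_three, hwi, ht3]
    linear_combination hu3 + hv3
  have hnorm : ‖w‖ ^ 2 = w ⬝ᵥ w := by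
    rw [EuclideanSpace.norm_eq, Real.sq_sqrt (Finset.sum_nonneg fun i _ => sq_nonneg _)]
    simp only [dotProduct, Real.norm_eq_abs, sq]
    exact Finset.sum_congr rfl fun i _ => abs_mul_abs_self _
  have htsq : t ^ 2 ≤ 1 := by
    have := cs3 u v
    rw [hu, hv, ← ht] at this
    linarith
  have ht1 : t ≤ 1 := by nlinarith
  have ht2 : -1 ≤ t := by nlinarith
  set lam : ℝ := (1 - γ) * (1 - t) + 2 * γ with hlam
  have hlampos : 0 < lam := by
    rcases lt_or_ge t 1 with h | h
    · nlinarith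
    · nlinarith
  -- M w = lam • w
  have hMw : M *ᵥ (w : Fin 3 → ℝ) = lam • (w : Fin 3 → ℝ) := by
    have huw : u ⬝ᵥ (w : Fin 3 → ℝ) = 1 - t := by
      simp only [dotProduct, Fin.sum_univ_three, hwi, ht3]
      linear_combination hu3
    have hvw : v ⬝ᵥ (w : Fin 3 → ℝ) = t - 1 := by
      simp only [dotProduct, Fin.sum_univ_three, hwi, ht3]
      linear_combination -hv3
    rw [hMdef, Matrix.add_mulVec, Matrix.smul_mulVec, Matrix.smul_mulVec,
      Matrix.add_mulVec, Matrix.one_mulVec, vecMulVec_mulVec_aux, vecMulVec_mulVec_aux,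
      huw, hvw]
    have hsm : ∀ (c : ℝ) (i : Fin 3), (c • (w : Fin 3 → ℝ)) i = c * (u i - v i) :=
      fun c i => rfl
    funext i
    simp only [Pi.add_apply, Pi.smul_apply, smul_eq_mul, hwi, hsm, hlam]
    ring
  -- M is positive definite, hence invertible
  have hPD : M.PosDef := by
    rw [Matrix.posDef_iff_dotProduct_mulVec]
    constructor
    · rw [hMdef]
      ext i j
      by_cases h : i = j
      · subst h; simp [Matrix.conjTranspose_apply, vecMulVec, mul_comm]
      · simp [Matrix.conjTranspose_apply, vecMulVec, Matrix.one_apply, h, Ne.symm h, mul_comm]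
    · intro x hx
      have hx2 : 0 < x ⬝ᵥ x := by
        obtain ⟨i, hi⟩ := Function.ne_iff.mp hx
        have : (0 : ℝ) < x i * x i := mul_self_pos.mpr hi
        have hsum : x ⬝ᵥ x = ∑ j, x j * x j := rfl
        rw [hsum]
        exact Finset.sum_pos' (fun j _ => mul_self_nonneg (x j))
          ⟨i, Finset.mem_univ i, this⟩
      have hux : (u ⬝ᵥ x) ^ 2 ≤ x ⬝ᵥ x := by
        have := cs3 u x
        rw [hu, one_mul] at this
        exact this
      have hvx : (v ⬝ᵥ x) ^ 2 ≤ x ⬝ᵥ x := by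
        have := cs3 v x
        rw [hv, one_mul] at this
        exact this
      have hval : star x ⬝ᵥ (M *ᵥ x)
          = (1 - γ) * ((u ⬝ᵥ x) ^ 2 + (v ⬝ᵥ x) ^ 2) + 2 * γ * (x ⬝ᵥ x) := by
        rw [hMdef, Matrix.add_mulVec, Matrix.smul_mulVec, Matrix.smul_mulVec,
          Matrix.add_mulVec, Matrix.one_mulVec, vecMulVec_mulVec_aux, vecMulVec_mulVec_aux]
        rw [star_trivial]
        simp only [dotProduct_add, dotProduct_smul, smul_eq_mul]
        rw [dotProduct_comm x u, dotProduct_comm x v]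
        ring
      rw [hval]
      exact posaux hγ hx2 hux hvx (sq_nonneg _) (sq_nonneg _)
  have hUnit : IsUnit M.det := (Matrix.isUnit_iff_isUnit_det M).mp hPD.isUnit
  -- M⁻¹ w = lam⁻¹ • w
  have hinv : M⁻¹ *ᵥ (w : Fin 3 → ℝ) = lam⁻¹ • (w : Fin 3 → ℝ) := by
    have h1 : M⁻¹ *ᵥ (M *ᵥ (w : Fin 3 → ℝ)) = (w : Fin 3 → ℝ) := by
      rw [Matrix.mulVec_mulVec, Matrix.nonsing_inv_mul M hUnit, Matrix.one_mulVec]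
    rw [hMw, Matrix.mulVec_smul] at h1
    calc M⁻¹ *ᵥ (w : Fin 3 → ℝ) = lam⁻¹ • (lam • (M⁻¹ *ᵥ (w : Fin 3 → ℝ))) := by
          rw [smul_smul, inv_mul_cancel₀ hlampos.ne', one_smul]
      _ = lam⁻¹ • (w : Fin 3 → ℝ) := by rw [h1]
  show w ⬝ᵥ (M⁻¹ *ᵥ (w : Fin 3 → ℝ)) = _
  rw [hinv, dotProduct_smul, smul_eq_mul, hww]
  have hnw : ‖w‖ ^ 2 = 2 - 2 * t := by rw [hnorm, hww]
  have hden : (1 - γ) * (2 - 2 * t) / 2 + 2 * γ = lam := by rw [hlam]; ring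
  show lam⁻¹ * (2 - 2 * t) = ‖w‖ ^ 2 / ((1 - γ) * ‖w‖ ^ 2 / 2 + 2 * γ)
  rw [hnw, hden, inv_mul_eq_div]
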